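/- Let ℒ be an invertible linear operator on ℝ^{n×n} with κ := ‖ℒ‖_F ‖ℒ^{-1}‖_F (operator norms induced by the Frobenius norm), and let d₁, d₂, u > 0 with d₁ κ u < 1. Suppose W, V ∈ ℝ^{n×n} satisfy ‖ℒ(V) + W‖_F ≤ u (d₁ ‖ℒ‖_F ‖V‖_F + d₂ ‖W‖_F). Then ‖ℒ(V) + W‖_F ≤ u (d₁ κ + d₂)/(1 − d₁ κ u) · ‖W‖_F. -/

import Mathlib

open Matrix

attribute [local instance] Matrix.frobeniusNormedAddCommGroup Matrix.frobeniusNormedSpace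

/-- Port note: the operator norm induced by the Frobenius norm, supplied explicitly because the
Frobenius topology is no longer reducibly the product topology of `Matrix`. -/
noncomputable instance frobeniusOpNormPort {n : ℕ} :
    Norm (Matrix (Fin n) (Fin n) ℝ →L[ℝ] Matrix (Fin n) (Fin n) ℝ) :=
  @ContinuousLinearMap.hasOpNorm ℝ ℝ (Matrix (Fin n) (Fin n) ℝ) (Matrix (Fin n) (Fin n) ℝ)
    _ _ _ _ _ _ (RingHom.id ℝ)

/-- Limiting-residual bound: if the invertible linear operator `ℒ` on `ℝ^{n×n}`
(with Frobenius norm and induced operator norms) has condition number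
`κ = ‖ℒ‖ ‖ℒ⁻¹‖` with `d₁ κ u < 1`, and
`‖ℒ(V) + W‖ ≤ u (d₁ ‖ℒ‖ ‖V‖ + d₂ ‖W‖)`, then
`‖ℒ(V) + W‖ ≤ u (d₁ κ + d₂)/(1 - d₁ κ u) ‖W‖`. -/
theorem residual_bound_of_solver_assumption {n : ℕ}
    (L Linv : Matrix (Fin n) (Fin n) ℝ →L[ℝ] Matrix (Fin n) (Fin n) ℝ)
    (hLinv₁ : ∀ M, Linv (L M) = M) (hLinv₂ : ∀ M, L (Linv M) = M)
    (d₁ d₂ u : ℝ) (hd₁ : 0 < d₁) (hd₂ : 0 < d₂) (hu : 0 < u)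
    (hκ : d₁ * (‖L‖ * ‖Linv‖) * u < 1)
    (W V : Matrix (Fin n) (Fin n) ℝ)
    (hres : ‖L V + W‖ ≤ u * (d₁ * ‖L‖ * ‖V‖ + d₂ * ‖W‖)) :
    ‖L V + W‖ ≤ u * (d₁ * (‖L‖ * ‖Linv‖) + d₂) / (1 - d₁ * (‖L‖ * ‖Linv‖) * u) * ‖W‖ := by
  set r := ‖L V + W‖ with hr
  have hr0 : 0 ≤ r := norm_nonneg _
  have hLV : ‖L V‖ ≤ r + ‖W‖ := by
    calc ‖L V‖ = ‖(L V + W) - W‖ := by rw [add_sub_cancel_right]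
    _ ≤ ‖L V + W‖ + ‖W‖ := norm_sub_le _ _
  have hV : ‖V‖ ≤ ‖Linv‖ * (r + ‖W‖) := by
    calc ‖V‖ = ‖Linv (L V)‖ := by rw [hLinv₁]
    _ ≤ ‖Linv‖ * ‖L V‖ := Linv.le_opNorm _
    _ ≤ ‖Linv‖ * (r + ‖W‖) := by
        exact mul_le_mul_of_nonneg_left hLV (by exact Linv.opNorm_nonneg)
  have key : r * (1 - d₁ * (‖L‖ * ‖Linv‖) * u) ≤ u * (d₁ * (‖L‖ * ‖Linv‖) + d₂) * ‖W‖ := by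
    have h2 : r ≤ u * (d₁ * ‖L‖ * (‖Linv‖ * (r + ‖W‖)) + d₂ * ‖W‖) := by
      refine hres.trans ?_
      nlinarith [mul_le_mul_of_nonneg_left hV (by exact mul_nonneg hu.le (mul_nonneg hd₁.le L.opNorm_nonneg) : (0:ℝ) ≤ u * (d₁ * ‖L‖))]
    nlinarith
  have hden : 0 < 1 - d₁ * (‖L‖ * ‖Linv‖) * u := by linarith
  rw [div_mul_eq_mul_div, le_div_iff₀ hden]
  linarith [key]
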